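/- For every real number d that is not an integer, Σ_{n∈ℤ} 1/(n+d)² = π²·csc²(πd). -/

import Mathlib

open MeasureTheory Real Complex intervalIntegral
set_option maxHeartbeats 1000000

noncomputable def myF (d : ℝ) : ℝ → ℂ := fun x => Complex.exp (2 * Real.pi * Complex.I * d * x)

lemma myF_norm (d x : ℝ) : ‖myF d x‖ = 1 := by
  simp [myF, Complex.norm_exp]

lemma myF_coeff (d : ℝ) (hd : ∀ k : ℤ, d ≠ (k : ℝ)) (n : ℤ) :
    fourierCoeffOn (by norm_num : (0:ℝ) < 0 + 1) (myF d) n =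
      (Complex.exp (2 * Real.pi * Complex.I * d) - 1) /
        (2 * Real.pi * Complex.I * (d - n)) := by
  have hc : (2 * (Real.pi:ℂ) * Complex.I * ((d:ℂ) - (n:ℂ))) ≠ 0 := by
    have hdn : (d:ℂ) - (n:ℂ) ≠ 0 := by
      intro h
      apply hd n
      have := sub_eq_zero.mp h
      exact_mod_cast this
    have hpi : (Real.pi : ℂ) ≠ 0 := by exact_mod_cast Real.pi_ne_zero
    simp [Complex.I_ne_zero, hpi, hdn]
  rw [fourierCoeffOn_eq_integral]
  simp only [fourier_coe_apply, myF, smul_eq_mul, ← Complex.exp_add]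
  have h1 : (fun x : ℝ => Complex.exp (2 * Real.pi * Complex.I * (-n : ℤ) * (x:ℂ) / ((0:ℝ) + 1 - 0 : ℝ) +
      2 * Real.pi * Complex.I * d * x)) = fun x : ℝ =>
      Complex.exp ((2 * Real.pi * Complex.I * ((d:ℂ) - n)) * x) := by
    funext x; norm_num; ring_nf
  show (1 / ((0:ℝ) + 1 - 0) : ℝ) • ∫ x in (0:ℝ)..(0+1), Complex.exp
      (2 * Real.pi * Complex.I * (-n : ℤ) * (x:ℂ) / ((0:ℝ) + 1 - 0 : ℝ) +
        2 * Real.pi * Complex.I * d * x) = _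
  rw [h1, integral_exp_mul_complex hc]
  have hn1 : Complex.exp (2 * Real.pi * Complex.I * (n:ℂ)) = 1 := by
    rw [show (2 * (Real.pi:ℂ) * Complex.I * (n:ℂ)) = (n:ℂ) * (2 * Real.pi * Complex.I) by ring]
    exact Complex.exp_int_mul_two_pi_mul_I n
  push_cast
  rw [mul_zero, Complex.exp_zero, show ((0:ℂ)+1)=1 by norm_num, mul_one, mul_sub, Complex.exp_sub, hn1, div_one]
  norm_num

lemma norm_exp_sub_one_sq (θ : ℝ) :
    ‖Complex.exp (θ * Complex.I) - 1‖ ^ 2 = 4 * Real.sin (θ / 2) ^ 2 := by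
  rw [Complex.exp_mul_I]
  have h : (Complex.cos θ + Complex.sin θ * Complex.I - 1) =
      Complex.mk (Real.cos θ - 1) (Real.sin θ) := by
    apply Complex.ext <;> simp [Complex.cos_ofReal_re, Complex.sin_ofReal_re]
  rw [h, Complex.sq_norm, Complex.normSq_mk]
  have h2 : Real.sin (θ/2) ^ 2 = 1/2 - Real.cos (2 * (θ/2)) / 2 := Real.sin_sq_eq_half_sub _
  rw [mul_div_cancel₀ _ (two_ne_zero)] at h2
  nlinarith [Real.sin_sq_add_cos_sq θ]

/-- For every real `d` that is not an integer, `∑_{n∈ℤ} 1/(n+d)² = π²·csc²(πd)`. -/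
theorem stmt_2 (d : ℝ) (hd : ∀ k : ℤ, d ≠ (k : ℝ)) :
    ∑' n : ℤ, 1 / ((n : ℝ) + d) ^ 2 = Real.pi ^ 2 * (1 / Real.sin (Real.pi * d)) ^ 2 := by
  haveI : Fact ((0:ℝ) < 1) := ⟨one_pos⟩
  set g : AddCircle (1:ℝ) → ℂ := AddCircle.liftIoc 1 0 (myF d) with hg_def
  have hg_norm : ∀ t, ‖g t‖ = 1 := fun t => myF_norm d _
  have hg_meas : Measurable g := by
    have h1 : Continuous (myF d) := by
      unfold myF; fun_prop
    exact (h1.measurable.comp measurable_subtype_coe).comp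
      (AddCircle.measurableEquivIoc 1 0).measurable
  have hmem : MemLp g 2 AddCircle.haarAddCircle :=
    MemLp.of_bound hg_meas.aestronglyMeasurable 1 (ae_of_all _ fun t => (hg_norm t).le)
  set F : Lp ℂ 2 AddCircle.haarAddCircle := hmem.toLp g with hF_def
  have hF_coeff : ∀ n : ℤ, fourierCoeff (⇑F) n = fourierCoeff g n := by
    intro n
    simp only [fourierCoeff]
    apply MeasureTheory.integral_congr_ae
    filter_upwards [hmem.coeFn_toLp] with t ht
    rw [ht]
  have hcoeff : ∀ n : ℤ, fourierCoeff g n =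
      (Complex.exp (2 * Real.pi * Complex.I * d) - 1) / (2 * Real.pi * Complex.I * (d - n)) := by
    intro n
    rw [hg_def, fourierCoeff_liftIoc_eq, ← myF_coeff d hd n]
  have hsin : Real.sin (Real.pi * d) ≠ 0 := by
    rw [Real.sin_ne_zero_iff]
    intro n h
    exact hd n (mul_left_cancel₀ Real.pi_ne_zero (by linarith)).symm
  have hnorm : ∀ n : ℤ, ‖fourierCoeff (⇑F) n‖ ^ 2 =
      (Real.sin (Real.pi * d) ^ 2 / Real.pi ^ 2) * (1 / (d - (n:ℝ)) ^ 2) := by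
    intro n
    rw [hF_coeff, hcoeff n]
    have h2 : (2 * (Real.pi:ℂ) * Complex.I * d) = ((2 * Real.pi * d : ℝ):ℂ) * Complex.I := by
      push_cast; ring
    rw [norm_div, div_pow, h2, norm_exp_sub_one_sq]
    have hden : ‖2 * (Real.pi:ℂ) * Complex.I * ((d:ℂ) - (n:ℂ))‖ ^ 2
        = 4 * Real.pi ^ 2 * (d - (n:ℝ)) ^ 2 := by
      have : ((d:ℂ) - (n:ℂ)) = ((d - (n:ℝ) : ℝ) : ℂ) := by push_cast; ring
      rw [this]
      simp only [norm_mul, Complex.norm_I, Complex.norm_real, Complex.norm_ofNat,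
        Real.norm_eq_abs, mul_one]
      rw [mul_pow, mul_pow, abs_of_pos Real.pi_pos, _root_.sq_abs]
      ring
    rw [hden]
    have hdn : d - (n:ℝ) ≠ 0 := sub_ne_zero.mpr (hd n)
    have : (2 * Real.pi * d) / 2 = Real.pi * d := by ring
    rw [this]
    field_simp
  have parseval := tsum_sq_fourierCoeff F
  have hRHS : ∫ t : AddCircle 1, ‖F t‖ ^ 2 ∂AddCircle.haarAddCircle = 1 := by
    have : ∫ t : AddCircle 1, ‖F t‖ ^ 2 ∂AddCircle.haarAddCircle
        = ∫ t : AddCircle 1, ‖g t‖ ^ 2 ∂AddCircle.haarAddCircle := by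
      apply MeasureTheory.integral_congr_ae
      filter_upwards [hmem.coeFn_toLp] with t ht
      rw [ht]
    rw [this]
    simp [hg_norm]
  rw [hRHS] at parseval
  simp only [hnorm] at parseval
  rw [tsum_mul_left] at parseval
  have hreindex : ∑' n : ℤ, 1 / ((n : ℝ) + d) ^ 2 = ∑' n : ℤ, 1 / (d - (n:ℝ)) ^ 2 := by
    rw [← (Equiv.neg ℤ).tsum_eq (fun n : ℤ => 1 / (d - (n:ℝ)) ^ 2)]
    apply tsum_congr
    intro n
    simp only [Equiv.neg_apply, Int.cast_neg, sub_neg_eq_add]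
    rw [add_comm]
  rw [hreindex]
  have hπ : Real.pi ≠ 0 := Real.pi_ne_zero
  have hs2 : Real.sin (Real.pi * d) ^ 2 / Real.pi ^ 2 ≠ 0 := by positivity
  field_simp at parseval ⊢
  nlinarith [parseval]
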